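/- arXiv:2104.10346 — 7 statements merged into one kernel-verified Lean document; each statement's English description precedes it below -/
import Mathlib

section
/- For positive integers m, n with m < n, and any integer k with 1 < 2k ≤ m and k ≤ n - m, one has P(n,k) - P(n-m,k) = m * Σ_{r=1}^{k} C(k,r) * P(m-r-1, r-1) * P(n-m+r, k-r), where P(a,b) = a!/(a-b)! denotes the falling factorial (number of b-permutations of a) and C(k,r) the binomial coefficient. -/
open Finset Nat

/-- The right-hand side sum, reindexed over `range k` with `r = s+1`. -/
private def gg (m t k : ℕ) : ℕ :=
  m * ∑ s ∈ Finset.range k,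
    k.choose (s+1) * (m - s - 2).descFactorial s * (t + s + 1).descFactorial (k - s - 1)

private lemma Pstep (a b : ℕ) :
    (a+1).descFactorial (b+1) = a.descFactorial (b+1) + (b+1) * a.descFactorial b := by
  rw [Nat.succ_descFactorial_succ, Nat.descFactorial_succ]
  rcases le_or_gt b a with h | h
  · have e : a + 1 = (a - b) + (b + 1) := by omega
    rw [e, Nat.add_mul]
  · simp [Nat.descFactorial_of_lt h]

private lemma Pstep2 (a b : ℕ) :
    (a+1).descFactorial b = a.descFactorial b + b * a.descFactorial (b-1) := by
  cases b with
  | zero => simp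
  | succ c => simpa using Pstep a c

/-- `P(n+1, n) = (n+1)!`. -/
private lemma Pss : ∀ j : ℕ, (j+1).descFactorial j = (j+1)! := by
  intro j
  induction j with
  | zero => simp
  | succ j ih =>
    rw [Nat.succ_descFactorial_succ, ih]
    rfl

private lemma chooseId (k s : ℕ) :
    (k+1).choose (s+1) * (k - s) = (k+1) * k.choose (s+1) := by
  have h1 : (k+1) * k.choose (s+1) = (k+1).choose (s+2) * (s+2) := by
    simpa using Nat.add_one_mul_choose_eq k (s+1)
  have h2 : (k+1).choose (s+2) * (s+2) = (k+1).choose (s+1) * ((k+1) - (s+1)) :=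
    Nat.choose_succ_right_eq (k+1) (s+1)
  have h3 : k + 1 - (s+1) = k - s := by omega
  rw [h1, h2, h3]

private lemma chooseId2 (k u : ℕ) :
    (k+1).choose (u+2) * (u+2) = (k+1) * k.choose (u+1) := by
  simpa using (Nat.add_one_mul_choose_eq k (u+1)).symm

private lemma hstep (M u : ℕ) (h : u + 2 ≤ M) :
    (M+2) * (M-u-1).descFactorial (u+1)
      = (M+1) * (M-u-2).descFactorial (u+1) + (u+2) * (M * (M-u-2).descFactorial u) := by
  obtain ⟨a, rfl⟩ : ∃ a, M = a + (u+2) := ⟨M - (u+2), by omega⟩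
  have e1 : a + (u+2) - u - 1 = a + 1 := by omega
  have e2 : a + (u+2) - u - 2 = a := by omega
  rw [e1, e2, Pstep a u, Nat.descFactorial_succ]
  rcases le_or_gt u a with h' | h'
  · obtain ⟨d, rfl⟩ : ∃ d, a = d + u := ⟨a - u, by omega⟩
    rw [Nat.add_sub_cancel]
    ring
  · rw [Nat.descFactorial_of_lt h']
    ring

/-- recurrence in `t`. -/
private lemma gA (m t k : ℕ) :
    gg m (t+1) (k+1) = gg m t (k+1) + (k+1) * gg m t k := by
  unfold gg
  have ext : ∑ s ∈ range k,
        k.choose (s+1) * (m - s - 2).descFactorial s * (t + s + 1).descFactorial (k - s - 1)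
      = ∑ s ∈ range (k+1),
        k.choose (s+1) * (m - s - 2).descFactorial s * (t + s + 1).descFactorial (k - s - 1) := by
    rw [Finset.sum_range_succ, Nat.choose_succ_self]
    simp
  rw [ext]
  have key : ∑ s ∈ range (k+1),
        (k+1).choose (s+1) * (m - s - 2).descFactorial s
          * (t + 1 + s + 1).descFactorial (k + 1 - s - 1)
      = ∑ s ∈ range (k+1),
        ((k+1).choose (s+1) * (m - s - 2).descFactorial s
            * (t + s + 1).descFactorial (k + 1 - s - 1)
          + (k+1) * (k.choose (s+1) * (m - s - 2).descFactorial s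
            * (t + s + 1).descFactorial (k - s - 1))) := by
    refine Finset.sum_congr rfl fun s hs => ?_
    have e1 : t + 1 + s + 1 = (t + s + 1) + 1 := by omega
    have e2 : k + 1 - s - 1 = k - s := by omega
    rw [e1, e2, Pstep2 (t+s+1) (k-s)]
    calc (k+1).choose (s+1) * (m - s - 2).descFactorial s
          * ((t+s+1).descFactorial (k-s) + (k-s) * (t+s+1).descFactorial (k-s-1))
        = (k+1).choose (s+1) * (m - s - 2).descFactorial s * (t+s+1).descFactorial (k-s)
          + ((k+1).choose (s+1) * (k-s))
            * ((m - s - 2).descFactorial s * (t+s+1).descFactorial (k-s-1)) := by ring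
      _ = (k+1).choose (s+1) * (m - s - 2).descFactorial s * (t+s+1).descFactorial (k-s)
          + (k+1) * (k.choose (s+1) * (m - s - 2).descFactorial s
            * (t+s+1).descFactorial (k-s-1)) := by rw [chooseId]; ring
  rw [key, Finset.sum_add_distrib]
  rw [← Finset.mul_sum (range (k+1)) _ (k+1)]
  ring

/-- recurrence in `m` (diagonal). -/
private lemma gB (M t k : ℕ) (h : k + 1 ≤ M) :
    gg (M+2) t (k+1)
      = gg (M+1) t (k+1) + (k+1) * ((t+1).descFactorial k + gg M (t+1) k) := by
  unfold gg
  have L2 : ∑ s ∈ range (k+1),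
        (k+1).choose (s+1) * (M + 2 - s - 2).descFactorial s
          * (t + s + 1).descFactorial (k + 1 - s - 1)
      = (∑ u ∈ range k, (k+1).choose (u+2) * (M - u - 1).descFactorial (u+1)
          * (t + u + 2).descFactorial (k - u - 1)) + (k+1) * (t+1).descFactorial k := by
    rw [Finset.sum_range_succ']
    congr 1
    · refine Finset.sum_congr rfl fun u hu => ?_
      have e1 : M + 2 - (u+1) - 2 = M - u - 1 := by omega
      have e2 : t + (u+1) + 1 = t + u + 2 := by omega
      have e3 : k + 1 - (u+1) - 1 = k - u - 1 := by omega
      rw [e1, e2, e3]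
    · simp [Nat.choose_one_right]
  have L1 : ∑ s ∈ range (k+1),
        (k+1).choose (s+1) * (M + 1 - s - 2).descFactorial s
          * (t + s + 1).descFactorial (k + 1 - s - 1)
      = (∑ u ∈ range k, (k+1).choose (u+2) * (M - u - 2).descFactorial (u+1)
          * (t + u + 2).descFactorial (k - u - 1)) + (k+1) * (t+1).descFactorial k := by
    rw [Finset.sum_range_succ']
    congr 1
    · refine Finset.sum_congr rfl fun u hu => ?_
      have e1 : M + 1 - (u+1) - 2 = M - u - 2 := by omega
      have e2 : t + (u+1) + 1 = t + u + 2 := by omega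
      have e3 : k + 1 - (u+1) - 1 = k - u - 1 := by omega
      rw [e1, e2, e3]
    · simp [Nat.choose_one_right]
  have R0 : ∑ u ∈ range k,
        k.choose (u+1) * (M - u - 2).descFactorial u
          * (t + 1 + u + 1).descFactorial (k - u - 1)
      = ∑ u ∈ range k, k.choose (u+1) * (M - u - 2).descFactorial u
          * (t + u + 2).descFactorial (k - u - 1) := by
    refine Finset.sum_congr rfl fun u hu => ?_
    have e : t + 1 + u + 1 = t + u + 2 := by omega
    rw [e]
  rw [L2, L1, R0]
  have key : (M+2) * ∑ u ∈ range k, (k+1).choose (u+2) * (M - u - 1).descFactorial (u+1)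
          * (t + u + 2).descFactorial (k - u - 1)
      = (M+1) * ∑ u ∈ range k, (k+1).choose (u+2) * (M - u - 2).descFactorial (u+1)
          * (t + u + 2).descFactorial (k - u - 1)
        + (k+1) * (M * ∑ u ∈ range k, k.choose (u+1) * (M - u - 2).descFactorial u
          * (t + u + 2).descFactorial (k - u - 1)) := by
    rw [Finset.mul_sum, Finset.mul_sum, Finset.mul_sum, Finset.mul_sum, ← Finset.sum_add_distrib]
    refine Finset.sum_congr rfl fun u hu => ?_
    have hu' : u + 2 ≤ M := by
      have := Finset.mem_range.mp hu; omega
    calc (M+2) * ((k+1).choose (u+2) * (M - u - 1).descFactorial (u+1)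
            * (t + u + 2).descFactorial (k - u - 1))
        = (k+1).choose (u+2) * (t + u + 2).descFactorial (k - u - 1)
            * ((M+2) * (M - u - 1).descFactorial (u+1)) := by ring
      _ = (k+1).choose (u+2) * (t + u + 2).descFactorial (k - u - 1)
            * ((M+1) * (M-u-2).descFactorial (u+1) + (u+2) * (M * (M-u-2).descFactorial u)) := by
          rw [hstep M u hu']
      _ = (M+1) * ((k+1).choose (u+2) * (M - u - 2).descFactorial (u+1)
            * (t + u + 2).descFactorial (k - u - 1))
          + ((k+1).choose (u+2) * (u+2))
            * (M * ((M-u-2).descFactorial u * (t + u + 2).descFactorial (k - u - 1))) := by ring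
      _ = (M+1) * ((k+1).choose (u+2) * (M - u - 2).descFactorial (u+1)
            * (t + u + 2).descFactorial (k - u - 1))
          + (k+1) * (M * (k.choose (u+1) * (M - u - 2).descFactorial u
            * (t + u + 2).descFactorial (k - u - 1))) := by rw [chooseId2]; ring
  rw [Nat.mul_add, Nat.mul_add, key]
  ring

/-- corner base case: `P(k+2, k+1) = gg (k+2) 0 (k+1)`. -/
private lemma corner (k : ℕ) : (k+2).descFactorial (k+1) = gg (k+2) 0 (k+1) := by
  have hsum : ∑ s ∈ range (k+1),
        (k+1).choose (s+1) * (k + 2 - s - 2).descFactorial s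
          * (0 + s + 1).descFactorial (k + 1 - s - 1)
      = (k+1)! := by
    rw [Finset.sum_eq_single_of_mem (k/2) (Finset.mem_range.mpr (by omega))]
    · have e1 : k + 2 - k/2 - 2 = k - k/2 := by omega
      have e2 : 0 + k/2 + 1 = k/2 + 1 := by omega
      have e3 : k + 1 - k/2 - 1 = k - k/2 := by omega
      rw [e1, e2, e3]
      rcases Nat.even_or_odd k with ⟨j, hj⟩ | ⟨j, hj⟩
      · have hj2 : k / 2 = j := by omega
        rw [hj2]
        have e4 : k - j = j := by omega
        rw [e4, Nat.descFactorial_self, Pss]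
        have h5 : (k+1).choose (j+1) * (j+1)! * ((k+1)-(j+1))! = (k+1)! :=
          Nat.choose_mul_factorial_mul_factorial (by omega)
        have e5 : (k+1) - (j+1) = j := by omega
        rw [e5] at h5
        rw [mul_right_comm] at h5
        exact h5
      · have hj2 : k / 2 = j := by omega
        rw [hj2]
        have e4 : k - j = j + 1 := by omega
        rw [e4, Nat.descFactorial_self, Pss]
        have h5 : (k+1).choose (j+1) * (j+1)! * ((k+1)-(j+1))! = (k+1)! :=
          Nat.choose_mul_factorial_mul_factorial (by omega)
        have e5 : (k+1) - (j+1) = j + 1 := by omega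
        rw [e5] at h5
        exact h5
    · intro s hs hne
      have hs' : s < k + 1 := Finset.mem_range.mp hs
      rcases lt_or_gt_of_ne hne with h | h
      · have hlt : 0 + s + 1 < k + 1 - s - 1 := by omega
        rw [Nat.descFactorial_of_lt hlt, Nat.mul_zero]
      · have hlt : k + 2 - s - 2 < s := by omega
        rw [Nat.descFactorial_of_lt hlt]
        simp
  unfold gg
  rw [hsum]
  have h6 : (k+2).descFactorial (k+1) = (k+2) * (k+1).descFactorial k :=
    Nat.succ_descFactorial_succ (k+1) k
  rw [h6, Pss]

/-- Main additive identity. -/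
private lemma main : ∀ k : ℕ, 1 ≤ k → ∀ m t : ℕ, k < m →
    (m + t).descFactorial k = t.descFactorial k + gg m t k := by
  intro k hk
  induction k, hk using Nat.le_induction with
  | base =>
    intro m t hm
    simp [gg, Finset.sum_range_one, Nat.descFactorial_one]
    omega
  | succ k hk IH =>
    have H0 : ∀ m : ℕ, k + 1 < m → m.descFactorial (k+1) = gg m 0 (k+1) := by
      intro m hm
      induction m, hm using Nat.le_induction with
      | base => exact corner k
      | succ m hm IHm =>
        obtain ⟨M, rfl⟩ : ∃ M, m = M + 1 := ⟨m - 1, by omega⟩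
        have hB := gB M 0 k (by omega)
        simp only [Nat.zero_add] at hB
        have hIH : (M + 1).descFactorial k = (1:ℕ).descFactorial k + gg M 1 k := by
          simpa using IH M 1 (by omega)
        have hP := Pstep (M+1) k
        show (M + 1 + 1).descFactorial (k+1) = gg (M + 1 + 1) 0 (k+1)
        rw [show M + 1 + 1 = M + 2 from rfl, hP, IHm, hIH, hB]
    intro m t hm
    induction t with
    | zero =>
      have h0 : (0 : ℕ).descFactorial (k+1) = 0 := Nat.zero_descFactorial_succ k
      rw [Nat.add_zero, h0, Nat.zero_add]
      exact H0 m hm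
    | succ t IHt =>
      have h1 : (m + (t+1)).descFactorial (k+1)
          = (m + t).descFactorial (k+1) + (k+1) * (m + t).descFactorial k := by
        rw [show m + (t+1) = (m+t) + 1 from by omega]
        exact Pstep (m+t) k
      have h2 : (t+1).descFactorial (k+1)
          = t.descFactorial (k+1) + (k+1) * t.descFactorial k := Pstep t k
      have h3 := gA m t k
      have h4 := IH m t (by omega)
      rw [h1, IHt, h4, h2, h3]
      ring

/-- P(n,k) - P(n-m,k) = m * Σ_{r=1}^{k} C(k,r) P(m-r-1,r-1) P(n-m+r,k-r). -/
theorem stmt_0 (m n k : ℕ) (hm : 0 < m) (hmn : m < n)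
    (hk1 : 1 < 2 * k) (hkm : 2 * k ≤ m) (hknm : k ≤ n - m) :
    n.descFactorial k - (n - m).descFactorial k =
      m * ∑ r ∈ Finset.Icc 1 k,
        k.choose r * (m - r - 1).descFactorial (r - 1) *
          (n - m + r).descFactorial (k - r) := by
  have hk : 1 ≤ k := by omega
  have hkm' : k < m := by omega
  have hmain := main k hk m (n - m) hkm'
  rw [show m + (n - m) = n from by omega] at hmain
  have hsum : m * ∑ r ∈ Finset.Icc 1 k,
        k.choose r * (m - r - 1).descFactorial (r - 1) *
          (n - m + r).descFactorial (k - r) = gg m (n - m) k := by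
    unfold gg
    congr 1
    rw [show Finset.Icc 1 k = Finset.Ico 1 (k+1) from by rw [Finset.Ico_add_one_right_eq_Icc],
      Finset.sum_Ico_eq_sum_range]
    refine Finset.sum_congr (by rw [Nat.add_sub_cancel]) fun s hs => ?_
    rw [show 1 + s = s + 1 from by omega]
    have e1 : m - (s + 1) - 1 = m - s - 2 := by omega
    have e2 : (s + 1) - 1 = s := by omega
    have e3 : n - m + (s + 1) = n - m + s + 1 := by omega
    have e4 : k - (s + 1) = k - s - 1 := by omega
    rw [e1, e2, e3, e4]
  rw [hsum]
  omega
end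

section
/- For natural numbers n and k, C(n+k, k)^2 = Σ_{r=0}^{k} C(k,r)^2 * C(n+2k-r, 2k) (Li Shanlan's identity). -/
open Finset

/-- Vandermonde's identity in `range` form. -/
lemma vand_range (a b m : ℕ) :
    (a + b).choose m = ∑ i ∈ Finset.range (m + 1), a.choose i * b.choose (m - i) := by
  rw [Nat.add_choose_eq, Finset.Nat.sum_antidiagonal_eq_sum_range_succ_mk]

/-- Trinomial revision, unconditional over ℕ. -/
lemma trinom (k r i : ℕ) :
    k.choose r * (k - r).choose i = k.choose i * (k - i).choose r := by
  rcases le_or_gt (r + i) k with h | h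
  · have h1 := Nat.choose_mul (n := k) (Nat.le_add_right r i)
    have h2 := Nat.choose_mul (n := k) (Nat.le_add_left i r)
    rw [Nat.add_sub_cancel_left] at h1
    rw [Nat.add_sub_cancel] at h2
    have h3 := Nat.choose_symm (Nat.le_add_right r i)
    rw [Nat.add_sub_cancel_left] at h3
    rw [← h1, ← h2, h3]
  · rcases le_or_gt r k with hr | hr
    · have e1 : (k - r).choose i = 0 := Nat.choose_eq_zero_of_lt (by omega)
      rcases le_or_gt i k with hi | hi
      · have e2 : (k - i).choose r = 0 := Nat.choose_eq_zero_of_lt (by omega)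
        simp [e1, e2]
      · simp [e1, Nat.choose_eq_zero_of_lt hi]
    · have e1 : k.choose r = 0 := Nat.choose_eq_zero_of_lt hr
      have e2 : (k - i).choose r = 0 := Nat.choose_eq_zero_of_lt (by omega)
      simp [e1, e2]

/-- Li Shanlan's identity. -/
theorem stmt_2 (n k : ℕ) :
    ((n + k).choose k) ^ 2 =
      ∑ r ∈ Finset.range (k + 1),
        (k.choose r) ^ 2 * (n + 2 * k - r).choose (2 * k) := by
  symm
  calc
    ∑ r ∈ Finset.range (k + 1), (k.choose r) ^ 2 * (n + 2 * k - r).choose (2 * k)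
        = ∑ r ∈ Finset.range (k + 1), ∑ i ∈ Finset.range (k + 1),
            (k.choose r) ^ 2 * ((k - r).choose i * (n + k).choose (2 * k - i)) := by
      refine Finset.sum_congr rfl fun r hr => ?_
      rw [Finset.mem_range] at hr
      have e : n + 2 * k - r = (k - r) + (n + k) := by omega
      rw [e, vand_range, ← Finset.mul_sum]
      congr 1
      refine (Finset.sum_subset (Finset.range_subset_range.mpr (by omega)) ?_).symm
      intro i hi hni
      have : k - r < i := by
        simp only [Finset.mem_range] at hi hni; omega
      rw [Nat.choose_eq_zero_of_lt this, zero_mul]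
    _ = ∑ i ∈ Finset.range (k + 1), ∑ r ∈ Finset.range (k + 1),
            (k.choose r) ^ 2 * ((k - r).choose i * (n + k).choose (2 * k - i)) :=
      Finset.sum_comm
    _ = ∑ i ∈ Finset.range (k + 1), (k.choose i * (n + k).choose (2 * k - i)) *
            ∑ r ∈ Finset.range (k + 1), (k - i).choose r * k.choose (k - r) := by
      refine Finset.sum_congr rfl fun i hi => ?_
      rw [Finset.mul_sum]
      refine Finset.sum_congr rfl fun r hr => ?_
      rw [Finset.mem_range] at hr hi
      have t := trinom k r i
      rw [Nat.choose_symm (show r ≤ k by omega), pow_two]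
      calc k.choose r * k.choose r * ((k - r).choose i * (n + k).choose (2 * k - i))
          = (k.choose r * (k - r).choose i) *
              (k.choose r * (n + k).choose (2 * k - i)) := by ring
        _ = (k.choose i * (k - i).choose r) *
              (k.choose r * (n + k).choose (2 * k - i)) := by rw [t]
        _ = k.choose i * (n + k).choose (2 * k - i) *
              ((k - i).choose r * k.choose r) := by ring
    _ = ∑ i ∈ Finset.range (k + 1),
            (k.choose i * (n + k).choose (2 * k - i)) * (2 * k - i).choose k := by
      refine Finset.sum_congr rfl fun i hi => ?_
      rw [Finset.mem_range] at hi
      congr 1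
      have e : 2 * k - i = (k - i) + k := by omega
      rw [e, vand_range]
    _ = ∑ i ∈ Finset.range (k + 1),
            k.choose i * ((n + k).choose k * n.choose (k - i)) := by
      refine Finset.sum_congr rfl fun i hi => ?_
      rw [Finset.mem_range] at hi
      rw [mul_assoc]
      congr 1
      rcases le_or_gt (k - i) n with h | h
      · have cm := Nat.choose_mul (n := n + k)
          (show k ≤ 2 * k - i by omega)
        rw [cm, Nat.add_sub_cancel, show 2 * k - i - k = k - i by omega]
      · have z1 : (n + k).choose (2 * k - i) = 0 :=
          Nat.choose_eq_zero_of_lt (by omega)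
        have z2 : n.choose (k - i) = 0 := Nat.choose_eq_zero_of_lt h
        simp [z1, z2]
    _ = (n + k).choose k *
          ∑ i ∈ Finset.range (k + 1), k.choose i * n.choose (k - i) := by
      rw [Finset.mul_sum]
      exact Finset.sum_congr rfl fun i _ => by ring
    _ = (n + k).choose k * (n + k).choose k := by
      rw [← vand_range, Nat.add_comm k n]
    _ = ((n + k).choose k) ^ 2 := (pow_two _).symm
end

section
/- Let j ≥ 0 and η = 1 + 2 + 2^2 + ... + 2^j = 2^{j+1} - 1. Let k be an integer with 1 ≤ k < η, and set a = η - k. For each i with 1 ≤ i ≤ a, define b_i to be the number obtained from the binary expansion of k + i by deleting all binary digits in positions strictly below the position t_i determined by 2^{t_i - 1} ≤ i < 2^{t_i} (i.e. b_i = Σ_{r ≥ t_i} a_{i,r} 2^r where k + i = Σ_r a_{i,r} 2^r is the binary expansion and t_i = ⌊log₂ i⌋ + 1). Then k * a = Σ_{i=1}^{a} b_i. -/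
/-- level function: t_i = log2(i)+1, shifted so index starts at 0 -/
def LL (i : ℕ) : ℕ := Nat.log 2 (i + 1) + 1

/-- truncation summand, reindexed: F k i = b_{i+1} for numerator k+(i+1) -/
def F (k i : ℕ) : ℕ := 2 ^ LL i * ((k + i + 1) / 2 ^ LL i)

/-- correction term -/
def C (k i : ℕ) : ℕ :=
  if i + 2 = 2 ^ LL i then 2 ^ LL i * ((k / 2 ^ LL i + 1) % 2) else 0

lemma trunc_step (n t : ℕ) :
    2 ^ t * (n / 2 ^ t) = 2 ^ (t + 1) * (n / 2 ^ (t + 1)) + 2 ^ t * (n / 2 ^ t % 2) := by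
  have h2 : n / 2 ^ (t + 1) = n / 2 ^ t / 2 := by
    rw [pow_succ, Nat.div_div_eq_div_mul]
  rw [h2]
  have h := Nat.div_add_mod (n / 2 ^ t) 2
  calc 2 ^ t * (n / 2 ^ t) = 2 ^ t * (2 * (n / 2 ^ t / 2) + n / 2 ^ t % 2) := by rw [h]
    _ = 2 ^ (t + 1) * (n / 2 ^ t / 2) + 2 ^ t * (n / 2 ^ t % 2) := by ring

lemma log_two_pred_pow {s : ℕ} (hs : 1 ≤ s) : Nat.log 2 (2 ^ s - 1) = s - 1 := by
  have h1 : 2 ^ (s - 1) ≤ 2 ^ s - 1 := by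
    have := Nat.one_le_two_pow (n := s - 1)
    have h : 2 ^ s = 2 ^ (s - 1) * 2 := by
      rw [← pow_succ]; congr 1; omega
    omega
  have h2 : 2 ^ s - 1 < 2 ^ (s - 1 + 1) := by
    have : 2 ^ (s - 1 + 1) = 2 ^ s := by congr 1; omega
    have hp := Nat.one_le_two_pow (n := s)
    omega
  exact Nat.log_eq_of_pow_le_of_lt_pow h1 h2

lemma log_succ (i : ℕ) :
    Nat.log 2 (i + 2) = if i + 2 = 2 ^ (Nat.log 2 (i + 1) + 1)
      then Nat.log 2 (i + 1) + 1 else Nat.log 2 (i + 1) := by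
  set t := Nat.log 2 (i + 1) with ht
  have hle : 2 ^ t ≤ i + 1 := Nat.pow_log_le_self 2 (by omega)
  have hlt : i + 1 < 2 ^ (t + 1) := Nat.lt_pow_succ_log_self (by norm_num) _
  split_ifs with h
  · rw [h, Nat.log_pow (by norm_num)]
  · exact Nat.log_eq_of_pow_le_of_lt_pow (by omega) (by omega)

/-- key step: shifting k by one vs shifting the index by one -/
lemma key_step (k i : ℕ) : F (k + 1) i = F k (i + 1) + C k i := by
  have hL : LL (i + 1) = if i + 2 = 2 ^ LL i then LL i + 1 else LL i := by
    simp only [LL]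
    rw [show i + 1 + 1 = i + 2 from rfl, log_succ i]
    split_ifs with hc <;> simp [hc]
  by_cases h : i + 2 = 2 ^ LL i
  · rw [if_pos h] at hL
    rw [C, if_pos h]
    have hn : k + (i + 1) + 1 = k + i + 2 := by omega
    have hn2 : k + 1 + i + 1 = k + i + 2 := by omega
    rw [F, F, hn, hn2, hL]
    have hdiv : (k + i + 2) / 2 ^ LL i = k / 2 ^ LL i + 1 := by
      have : k + i + 2 = k + 2 ^ LL i := by omega
      rw [this, Nat.add_div_right _ (by positivity : 0 < 2 ^ LL i)]
    rw [trunc_step (k + i + 2) (LL i), hdiv]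
  · rw [if_neg h] at hL
    rw [C, if_neg h, add_zero, F, F, hL]
    congr 2 <;> omega

lemma binary_sum (m : ℕ) : ∀ t, ∑ s ∈ Finset.range t, 2 ^ s * (m / 2 ^ s % 2) = m % 2 ^ t := by
  intro t
  induction t with
  | zero => simp [Nat.mod_one]
  | succ t ih =>
    rw [Finset.sum_range_succ, ih]
    have hp : (0:ℕ) < 2 ^ t := by positivity
    have h1 := Nat.div_add_mod m (2 ^ t)
    have h2 := Nat.div_add_mod m (2 ^ (t + 1))
    have h5 := trunc_step m t
    omega

lemma parity_aux (P Q k m : ℕ) (hp : 0 < P) (hQ : Q % 2 = 0)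
    (hkm : k + m + 1 = P * Q) :
    (k / P + 1) % 2 = m / P % 2 := by
  have hm1 := Nat.div_add_mod m P
  have hr : m % P < P := Nat.mod_lt _ hp
  have hqlt : m / P + 1 ≤ Q := by
    by_contra hcon
    have h1 : Q ≤ m / P := by omega
    have h2 : P * Q ≤ P * (m / P) := Nat.mul_le_mul_left _ h1
    omega
  have hmul : P * (Q - 1 - m / P) = P * Q - P - P * (m / P) := by
    rw [Nat.mul_sub, Nat.mul_sub, mul_one]
  have hmul2 : P * (m / P) + P ≤ P * Q := by
    have := Nat.mul_le_mul_left P hqlt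
    rw [Nat.mul_add, mul_one] at this
    omega
  have hkeq : k = P * (Q - 1 - m / P) + (P - 1 - m % P) := by omega
  have hz : (P - 1 - m % P) / P = 0 := Nat.div_eq_of_lt (by omega)
  have hdiv : k / P = Q - 1 - m / P := by
    rw [hkeq, Nat.mul_add_div hp, hz, add_zero]
  rw [hdiv]
  omega

lemma parity_lemma (j s k m : ℕ) (hs1 : 1 ≤ s) (hsj : s ≤ j)
    (hkm : k + m + 1 = 2 ^ (j + 1)) :
    (k / 2 ^ s + 1) % 2 = m / 2 ^ s % 2 := by
  have hp : (0:ℕ) < 2 ^ s := by positivity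
  have hpow : 2 ^ s * 2 ^ (j + 1 - s) = 2 ^ (j + 1) := by
    rw [← pow_add]; congr 1; omega
  have heven : 2 ^ (j + 1 - s) % 2 = 0 := by
    rw [show j + 1 - s = (j - s) + 1 from by omega, pow_succ]
    omega
  exact parity_aux (2 ^ s) (2 ^ (j + 1 - s)) k m hp heven (by rw [hkm, ← hpow])

lemma Dsum (j k a : ℕ) (hk : 1 ≤ k) (h : k + a + 2 = 2 ^ (j + 1)) :
    ∑ i ∈ Finset.range a, C k i = (a + 1) - (a + 1) % 2 := by
  classical
  set t := Nat.log 2 (a + 1) with ht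
  have hta : 2 ^ t ≤ a + 1 := Nat.pow_log_le_self 2 (by omega)
  have hta2 : a + 1 < 2 ^ (t + 1) := Nat.lt_pow_succ_log_self (by norm_num) _
  have htj : t ≤ j := by
    by_contra hcon
    have h1 : j + 1 ≤ t := by omega
    have := Nat.pow_le_pow_right (show 1 ≤ 2 by norm_num) h1
    omega
  -- step 1: sum of C equals sum over Icc 1 t
  have h1 : ∑ i ∈ Finset.range a, C k i
      = ∑ s ∈ Finset.Icc 1 t, 2 ^ s * ((k / 2 ^ s + 1) % 2) := by
    unfold C
    rw [← Finset.sum_filter]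
    refine Finset.sum_nbij' (fun i => LL i) (fun s => 2 ^ s - 2) ?_ ?_ ?_ ?_ ?_
    · intro i hi
      beta_reduce
      simp only [Finset.mem_filter, Finset.mem_range] at hi
      obtain ⟨hir, hcond⟩ := hi
      have hL1 : 1 ≤ LL i := by simp [LL]
      have : 2 ^ LL i ≤ a + 1 := by omega
      have := (Nat.le_log_iff_pow_le (by norm_num) (show a + 1 ≠ 0 by omega)).mpr this
      simp only [Finset.mem_Icc]
      omega
    · intro s hs
      beta_reduce
      simp only [Finset.mem_Icc] at hs
      obtain ⟨hs1, hs2⟩ := hs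
      have hps : 2 ≤ 2 ^ s := by
        calc (2:ℕ) = 2 ^ 1 := (pow_one 2).symm
        _ ≤ 2 ^ s := Nat.pow_le_pow_right (by norm_num) hs1
      have hsa : 2 ^ s ≤ a + 1 := le_trans (Nat.pow_le_pow_right (by norm_num) hs2) hta
      have hlog : Nat.log 2 (2 ^ s - 1) = s - 1 := log_two_pred_pow hs1
      simp only [Finset.mem_filter, Finset.mem_range]
      constructor
      · omega
      · simp only [LL, show 2 ^ s - 2 + 1 = 2 ^ s - 1 from by omega, hlog]
        rw [show s - 1 + 1 = s from by omega]
        omega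
    · intro i hi
      beta_reduce
      simp only [Finset.mem_filter, Finset.mem_range] at hi
      omega
    · intro s hs
      beta_reduce
      simp only [Finset.mem_Icc] at hs
      obtain ⟨hs1, hs2⟩ := hs
      have hps : 2 ≤ 2 ^ s := by
        calc (2:ℕ) = 2 ^ 1 := (pow_one 2).symm
        _ ≤ 2 ^ s := Nat.pow_le_pow_right (by norm_num) hs1
      have hlog : Nat.log 2 (2 ^ s - 1) = s - 1 := log_two_pred_pow hs1
      simp only [LL, show 2 ^ s - 2 + 1 = 2 ^ s - 1 from by omega, hlog]
      omega
    · intro i hi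
      beta_reduce
      simp only [Finset.mem_filter, Finset.mem_range] at hi
      rfl
  -- step 2: replace parity of k by parity of m = a+1
  have h2 : ∑ s ∈ Finset.Icc 1 t, 2 ^ s * ((k / 2 ^ s + 1) % 2)
      = ∑ s ∈ Finset.Icc 1 t, 2 ^ s * ((a + 1) / 2 ^ s % 2) := by
    refine Finset.sum_congr rfl ?_
    intro s hs
    simp only [Finset.mem_Icc] at hs
    rw [parity_lemma j s k (a + 1) hs.1 (le_trans hs.2 htj) (by omega)]
  -- step 3: evaluate the binary sum
  have h3 : ∑ s ∈ Finset.Icc 1 t, 2 ^ s * ((a + 1) / 2 ^ s % 2) = (a + 1) - (a + 1) % 2 := by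
    have hb := binary_sum (a + 1) (t + 1)
    rw [Finset.sum_range_succ'] at hb
    have hIco : Finset.Icc 1 t = Finset.Ico 1 (t + 1) := by
      rw [Finset.Ico_add_one_right_eq_Icc]
    rw [hIco, Finset.sum_Ico_eq_sum_range]
    simp only [pow_zero, one_mul] at hb
    have hmod : (a + 1) % 2 ^ (t + 1) = a + 1 := Nat.mod_eq_of_lt hta2
    rw [hmod] at hb
    have : ∑ i ∈ Finset.range (t + 1 - 1), 2 ^ (1 + i) * ((a + 1) / 2 ^ (1 + i) % 2)
        = ∑ i ∈ Finset.range t, 2 ^ (i + 1) * ((a + 1) / 2 ^ (i + 1) % 2) := by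
      rw [show t + 1 - 1 = t from rfl]
      refine Finset.sum_congr rfl ?_
      intro i _
      rw [Nat.add_comm 1 i]
    rw [this]
    omega
  rw [h1, h2, h3]

lemma main_lemma (j : ℕ) : ∀ a k : ℕ, 1 ≤ k → k + a + 1 = 2 ^ (j + 1) →
    k * a = ∑ i ∈ Finset.range a, F k i := by
  intro a
  induction a with
  | zero => intro k _ _; simp
  | succ a ih =>
    intro k hk hsum
    have ih' := ih (k + 1) (by omega) (by omega)
    rw [Finset.sum_range_succ']
    have hkey : ∀ i ∈ Finset.range a, F (k + 1) i = F k (i + 1) + C k i :=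
      fun i _ => key_step k i
    have hsplit : ∑ i ∈ Finset.range a, F (k + 1) i
        = ∑ i ∈ Finset.range a, F k (i + 1) + ∑ i ∈ Finset.range a, C k i := by
      rw [← Finset.sum_add_distrib]
      exact Finset.sum_congr rfl hkey
    have hD : ∑ i ∈ Finset.range a, C k i = (a + 1) - (a + 1) % 2 :=
      Dsum j k a hk (by omega)
    have hF0 : F k 0 = 2 * ((k + 1) / 2) := by
      simp [F, LL, Nat.log_one_right]
    have hE : 2 ^ (j + 1) % 2 = 0 := by rw [pow_succ]; omega
    rw [hF0]
    rw [hsplit, hD] at ih'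
    have h1 : (k + 1) * a = k * a + a := by ring
    have h2 : k * (a + 1) = k * a + k := by ring
    rw [h1] at ih'
    rw [h2]
    omega

/-- k * a = Σ_{i=1}^{a} b_i where b_i is the truncation of the
binary expansion of k + i at level t_i = ⌊log₂ i⌋ + 1. -/
theorem stmt_3 (j k a : ℕ) (hk1 : 1 ≤ k) (hk2 : k < 2 ^ (j + 1) - 1)
    (ha : a = (2 ^ (j + 1) - 1) - k) :
    k * a = ∑ i ∈ Finset.Icc 1 a,
      2 ^ (Nat.log 2 i + 1) * ((k + i) / 2 ^ (Nat.log 2 i + 1)) := by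
  have h2 : 2 ≤ 2 ^ (j + 1) := by
    calc (2:ℕ) = 2 ^ 1 := (pow_one 2).symm
    _ ≤ 2 ^ (j + 1) := Nat.pow_le_pow_right (by norm_num) (by omega)
  have hsum : k + a + 1 = 2 ^ (j + 1) := by omega
  have hicc : ∑ i ∈ Finset.Icc 1 a,
      2 ^ (Nat.log 2 i + 1) * ((k + i) / 2 ^ (Nat.log 2 i + 1))
      = ∑ i ∈ Finset.range a, F k i := by
    rw [← Finset.Ico_add_one_right_eq_Icc, Finset.sum_Ico_eq_sum_range]
    refine Finset.sum_congr (by rw [show a + 1 - 1 = a from rfl]) ?_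
    intro i _
    simp only [F, LL]
    rw [show 1 + i = i + 1 from by omega, show k + (i + 1) = k + i + 1 from by omega]
  rw [hicc]
  exact main_lemma j a k hk1 hsum
end

section
/- Let m ≥ 1 and let k be an integer with 1 ≤ k < 2^{m+1} - 1, and set b = (2^{m+1} - 1) - k and a = b + 2^{m+1}. With b_i defined as the truncation of the binary expansion of k + i at level t_i (where 2^{t_i - 1} ≤ i < 2^{t_i}), one has b_{b+1} = b_{b+2} = ... = b_{b+k} = 2^{m+1} and b_{b+k+1} = ... = b_{b+2^{m+1}} = 0. -/
/-- with b = (2^{m+1}-1) - k and a = b + 2^{m+1},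
the truncations b_i of k+i satisfy b_{b+1} = ⋯ = b_{b+k} = 2^{m+1}
and b_{b+k+1} = ⋯ = b_{b+2^{m+1}} = 0. -/
theorem stmt_4 (m k b : ℕ) (hm : 1 ≤ m) (hk1 : 1 ≤ k) (hk2 : k < 2 ^ (m + 1) - 1)
    (hb : b = (2 ^ (m + 1) - 1) - k) :
    (∀ i, b + 1 ≤ i → i ≤ b + k →
        2 ^ (Nat.log 2 i + 1) * ((k + i) / 2 ^ (Nat.log 2 i + 1)) = 2 ^ (m + 1)) ∧
    (∀ i, b + k + 1 ≤ i → i ≤ b + 2 ^ (m + 1) →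
        2 ^ (Nat.log 2 i + 1) * ((k + i) / 2 ^ (Nat.log 2 i + 1)) = 0) := by
  set N := 2 ^ (m + 1) with hN
  have hN4 : 4 ≤ N := by
    calc (4 : ℕ) = 2 ^ 2 := rfl
    _ ≤ 2 ^ (m + 1) := Nat.pow_le_pow_right (by norm_num) (by omega)
  have hbN : b = N - 1 - k := hb
  constructor
  · intro i h1 h2
    have hi1 : N - k ≤ i := by omega
    have hi2 : i ≤ N - 1 := by omega
    have hipos : 0 < i := by omega
    set t := Nat.log 2 i + 1 with ht
    have hit : i < 2 ^ t := Nat.lt_pow_succ_log_self (by norm_num) i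
    have htm : t ≤ m + 1 := by
      have : Nat.log 2 i < m + 1 := Nat.log_lt_of_lt_pow (by omega) (by omega)
      omega
    have hdvd : 2 ^ t ∣ N := pow_dvd_pow 2 htm
    have hNi : N ≤ k + i := by omega
    have hup : k + i < N + 2 ^ t := by omega
    obtain ⟨q, hq⟩ := hdvd
    have hki : k + i = 2 ^ t * q + (k + i - N) := by omega
    have hpos : 0 < 2 ^ t := by positivity
    have hr : (k + i - N) < 2 ^ t := by omega
    have hdiv : (k + i) / 2 ^ t = q := by
      rw [hki, Nat.mul_add_div hpos, Nat.div_eq_of_lt hr]; omega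
    rw [hdiv, ← hq]
  · intro i h1 h2
    have hi1 : N ≤ i := by omega
    have hi2 : i < 2 * N := by omega
    have hlog : Nat.log 2 i = m + 1 := by
      apply Nat.log_eq_of_pow_le_of_lt_pow
      · exact hi1
      · calc i < 2 * N := hi2
          _ = 2 ^ (m + 1 + 1) := by rw [hN]; ring
    rw [hlog]
    have : k + i < 2 ^ (m + 1 + 1) := by
      have : (2 : ℕ) ^ (m + 1 + 1) = 2 * N := by rw [hN]; ring
      omega
    rw [Nat.div_eq_of_lt this, Nat.mul_zero]
end

section
/- Let m ≥ 1 and k = 2^{m+1} - 1, a = 2^{m+1}. For 1 ≤ i ≤ a, define b_i = 2^{t_i} ⌊(k+i)/2^{t_i}⌋ where 2^{t_i - 1} ≤ i < 2^{t_i}. Then b_i = 2^{m+1} for i = 1, ..., 2^{m+1} - 1 and b_{2^{m+1}} = 0; in particular Σ_{i=1}^{a} b_i = k * a. -/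
/-- for k = 2^{m+1} - 1 and a = 2^{m+1}, the truncations b_i equal
2^{m+1} for i = 1, …, 2^{m+1} - 1 and b_a = 0, and Σ b_i = k * a. -/
theorem stmt_5 (m k a : ℕ) (hm : 1 ≤ m) (hk : k = 2 ^ (m + 1) - 1)
    (ha : a = 2 ^ (m + 1)) :
    (∀ i, 1 ≤ i → i ≤ 2 ^ (m + 1) - 1 →
        2 ^ (Nat.log 2 i + 1) * ((k + i) / 2 ^ (Nat.log 2 i + 1)) = 2 ^ (m + 1)) ∧
    2 ^ (Nat.log 2 a + 1) * ((k + a) / 2 ^ (Nat.log 2 a + 1)) = 0 ∧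
    (∑ i ∈ Finset.Icc 1 a,
        2 ^ (Nat.log 2 i + 1) * ((k + i) / 2 ^ (Nat.log 2 i + 1))) = k * a := by
  have hpow1 : 1 ≤ 2 ^ (m + 1) := Nat.one_le_two_pow
  have main : ∀ i, 1 ≤ i → i ≤ 2 ^ (m + 1) - 1 →
      2 ^ (Nat.log 2 i + 1) * ((k + i) / 2 ^ (Nat.log 2 i + 1)) = 2 ^ (m + 1) := by
    intro i hi1 hi2
    have hi0 : i ≠ 0 := by omega
    have hlog : Nat.log 2 i < m + 1 := by
      exact Nat.log_lt_of_lt_pow hi0 (by omega)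
    have ht : Nat.log 2 i + 1 ≤ m + 1 := hlog
    set t := Nat.log 2 i + 1 with htdef
    have hilt : i < 2 ^ t := Nat.lt_pow_succ_log_self (by norm_num) i
    obtain ⟨c, hc⟩ : 2 ^ t ∣ 2 ^ (m + 1) := pow_dvd_pow 2 ht
    have htpos : 0 < 2 ^ t := Nat.pow_pos (n := t) (by norm_num)
    have hki : k + i = 2 ^ t * c + (i - 1) := by omega
    have hdiv : (k + i) / 2 ^ t = c := by
      rw [hki, Nat.mul_add_div htpos, Nat.div_eq_of_lt (by omega)]; omega
    rw [hdiv, ← hc]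
  refine ⟨main, ?_, ?_⟩
  · have hlog : Nat.log 2 a = m + 1 := by rw [ha]; exact Nat.log_pow (by norm_num : 1 < 2) (m + 1)
    have : (k + a) / 2 ^ (Nat.log 2 a + 1) = 0 := by
      apply Nat.div_eq_of_lt
      rw [hlog]
      have : 2 ^ (m + 1 + 1) = 2 * 2 ^ (m + 1) := by ring
      omega
    rw [this, Nat.mul_zero]
  · have ha1 : a = (a - 1) + 1 := by omega
    rw [ha1, Finset.sum_Icc_succ_top (by omega)]
    rw [← ha1]
    have hlast : 2 ^ (Nat.log 2 a + 1) * ((k + a) / 2 ^ (Nat.log 2 a + 1)) = 0 := by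
      have hlog : Nat.log 2 a = m + 1 := by rw [ha]; exact Nat.log_pow (by norm_num : 1 < 2) (m + 1)
      have : (k + a) / 2 ^ (Nat.log 2 a + 1) = 0 := by
        apply Nat.div_eq_of_lt
        rw [hlog]
        have : 2 ^ (m + 1 + 1) = 2 * 2 ^ (m + 1) := by ring
        omega
      rw [this, Nat.mul_zero]
    rw [hlast, Nat.add_zero]
    have hsum : (∑ i ∈ Finset.Icc 1 (a - 1),
        2 ^ (Nat.log 2 i + 1) * ((k + i) / 2 ^ (Nat.log 2 i + 1)))
        = ∑ _i ∈ Finset.Icc 1 (a - 1), 2 ^ (m + 1) := by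
      apply Finset.sum_congr rfl
      intro i hi
      rw [Finset.mem_Icc] at hi
      exact main i hi.1 (by omega)
    rw [hsum, Finset.sum_const, Nat.card_Icc]
    have : a - 1 = k := by omega
    rw [show a - 1 + 1 - 1 = k by omega, smul_eq_mul, ← ha]
end

section
/- Let m, n, k be positive integers with 2(k+1) ≤ m and n - m ≥ k + 1, and suppose the identity P(N,k) - P(N-M,k) = M Σ_{r=1}^{k} C(k,r) P(M-r-1,r-1) P(N-M+r,k-r) holds for all N, M with M ≥ 2k and N - M ≥ k. Then (n - m + k + 1) * Σ_{r=1}^{k} C(k, r-1) * P(m-r-1, r-1) * P(n-m+r-1, k-r) = P(n-1, k) - P(m-k-2, k). -/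
/-- the key inductive step identity. -/
theorem stmt_11 (m n k : ℕ) (hm : 0 < m) (hn : 0 < n) (hk : 0 < k)
    (h1 : 2 * (k + 1) ≤ m) (h2 : k + 1 ≤ n - m)
    (ih : ∀ N M : ℕ, 2 * k ≤ M → k ≤ N - M →
      N.descFactorial k - (N - M).descFactorial k =
        M * ∑ r ∈ Finset.Icc 1 k,
          k.choose r * (M - r - 1).descFactorial (r - 1) *
            (N - M + r).descFactorial (k - r)) :
    (n - m + k + 1) * ∑ r ∈ Finset.Icc 1 k,
        k.choose (r - 1) * (m - r - 1).descFactorial (r - 1) *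
          (n - m + r - 1).descFactorial (k - r) =
      (n - 1).descFactorial k - (m - k - 2).descFactorial k := by
  have hnm : m + (k + 1) ≤ n := by omega
  have key := ih (n - 1) (n - m + k + 1) (by omega) (by omega)
  rw [show n - 1 - (n - m + k + 1) = m - k - 2 from by omega] at key
  rw [key]
  congr 1
  refine Finset.sum_nbij' (fun r => k + 1 - r) (fun r => k + 1 - r) ?_ ?_ ?_ ?_ ?_
  · intro r hr; simp only [Finset.mem_Icc] at *; omega
  · intro r hr; simp only [Finset.mem_Icc] at *; omega
  · intro r hr; simp only [Finset.mem_Icc] at *; omega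
  · intro r hr; simp only [Finset.mem_Icc] at *; omega
  · intro r hr
    simp only [Finset.mem_Icc] at hr
    beta_reduce
    rw [show n - m + k + 1 - (k + 1 - r) - 1 = n - m + r - 1 from by omega,
      show k + 1 - r - 1 = k - r from by omega,
      show m - k - 2 + (k + 1 - r) = m - r - 1 from by omega,
      show k - (k + 1 - r) = r - 1 from by omega,
      show k + 1 - r = k - (r - 1) from by omega,
      Nat.choose_symm (by omega)]
    ring
end

section
/- Let m ≥ 1 and 2^{m+1} < k < 2^{m+2} - 1, with a = (2^{m+2} - 1) - k. Define b_i = 2^{t_i} ⌊(k+i)/2^{t_i}⌋ where 2^{t_i-1} ≤ i < 2^{t_i}, for 1 ≤ i ≤ a. Then b_i ≥ 2^{m+1} for all i, and setting T_i = b_i - 2^{m+1}, T_i equals the corresponding truncation of (k - 2^{m+1}) + i; consequently if (k - 2^{m+1}) a = Σ_{i=1}^a T_i then k a = Σ_{i=1}^a b_i. -/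
/-- reduction step for 2^{m+1} < k < 2^{m+2} - 1. -/
theorem stmt_13 (m k a : ℕ) (hm : 1 ≤ m) (hk1 : 2 ^ (m + 1) < k)
    (hk2 : k < 2 ^ (m + 2) - 1) (ha : a = (2 ^ (m + 2) - 1) - k) :
    (∀ i, 1 ≤ i → i ≤ a →
        2 ^ (m + 1) ≤ 2 ^ (Nat.log 2 i + 1) * ((k + i) / 2 ^ (Nat.log 2 i + 1))) ∧
    (∀ i, 1 ≤ i → i ≤ a →
        2 ^ (Nat.log 2 i + 1) * ((k + i) / 2 ^ (Nat.log 2 i + 1)) - 2 ^ (m + 1) =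
          2 ^ (Nat.log 2 i + 1) * ((k - 2 ^ (m + 1) + i) / 2 ^ (Nat.log 2 i + 1))) ∧
    ((k - 2 ^ (m + 1)) * a =
        (∑ i ∈ Finset.Icc 1 a,
          (2 ^ (Nat.log 2 i + 1) * ((k + i) / 2 ^ (Nat.log 2 i + 1)) - 2 ^ (m + 1))) →
      k * a = ∑ i ∈ Finset.Icc 1 a,
        2 ^ (Nat.log 2 i + 1) * ((k + i) / 2 ^ (Nat.log 2 i + 1))) := by
  have hpow : (2:ℕ) ^ (m + 2) = 2 * 2 ^ (m + 1) := by ring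
  have key : ∀ i, 1 ≤ i → i ≤ a →
      2 ^ (Nat.log 2 i + 1) * ((k + i) / 2 ^ (Nat.log 2 i + 1)) =
        2 ^ (m + 1) + 2 ^ (Nat.log 2 i + 1) * ((k - 2 ^ (m + 1) + i) / 2 ^ (Nat.log 2 i + 1)) := by
    intro i hi1 hi2
    set t := Nat.log 2 i + 1 with ht
    have hilt : i < 2 ^ (m + 1) := by omega
    have hlog : Nat.log 2 i < m + 1 := Nat.log_lt_of_lt_pow (by omega) hilt
    have hts : t ≤ m + 1 := by omega
    have hdvd : (2:ℕ) ^ t ∣ 2 ^ (m + 1) := pow_dvd_pow 2 hts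
    obtain ⟨c, hc⟩ := hdvd
    have hsplit : k + i = 2 ^ t * c + (k - 2 ^ (m + 1) + i) := by omega
    have hpos : 0 < (2:ℕ) ^ t := Nat.pow_pos (by norm_num)
    rw [hsplit, Nat.mul_add_div hpos, Nat.mul_add, ← hc]
  refine ⟨?_, ?_, ?_⟩
  · intro i h1 h2; rw [key i h1 h2]; omega
  · intro i h1 h2; rw [key i h1 h2]; omega
  · intro hyp
    have hsum : ∑ i ∈ Finset.Icc 1 a,
        2 ^ (Nat.log 2 i + 1) * ((k + i) / 2 ^ (Nat.log 2 i + 1)) =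
        ∑ i ∈ Finset.Icc 1 a,
          (2 ^ (m + 1) + 2 ^ (Nat.log 2 i + 1) * ((k - 2 ^ (m + 1) + i) / 2 ^ (Nat.log 2 i + 1))) :=
      Finset.sum_congr rfl (fun i hi => by
        rw [Finset.mem_Icc] at hi; exact key i hi.1 hi.2)
    have hsum2 : ∑ i ∈ Finset.Icc 1 a,
        (2 ^ (Nat.log 2 i + 1) * ((k + i) / 2 ^ (Nat.log 2 i + 1)) - 2 ^ (m + 1)) =
        ∑ i ∈ Finset.Icc 1 a,
          2 ^ (Nat.log 2 i + 1) * ((k - 2 ^ (m + 1) + i) / 2 ^ (Nat.log 2 i + 1)) :=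
      Finset.sum_congr rfl (fun i hi => by
        rw [Finset.mem_Icc] at hi; rw [key i hi.1 hi.2]; omega)
    rw [hsum, Finset.sum_add_distrib, Finset.sum_const, Nat.card_Icc]
    rw [hsum2] at hyp
    have : k * a = 2 ^ (m + 1) * a + (k - 2 ^ (m + 1)) * a := by
      rw [← Nat.add_mul]; congr 1; omega
    rw [this, hyp]
    simp [Nat.mul_comm]
end
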